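/- Let T be an aperiodic Borel automorphism of a standard Borel space (X, 𝓑). Then for every integer m ≥ 1, every ε > 0, and any finite list of Borel probability measures μ₁, …, μ_p on X, there exists a Borel set F ⊆ X such that the sets F, T(F), T²(F), …, T^{m-1}(F) are pairwise disjoint and μᵢ(F ∪ T(F) ∪ ⋯ ∪ T^{m-1}(F)) > 1 − ε for every i = 1, …, p. -/

import Mathlib

open MeasureTheory Filter Set
open scoped ENNReal NNReal

namespace RokhlinAux

variable {X : Type*} [MeasurableSpace X]

/-- The ℤ-action generated by `T`. -/
noncomputable def Z (T : X ≃ᵐ X) (n : ℤ) : X → X := ⇑(T.toEquiv ^ n)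

lemma Z_add (T : X ≃ᵐ X) (a b : ℤ) (x : X) : Z T (a + b) x = Z T a (Z T b x) := by
  simp [Z, zpow_add, Equiv.Perm.mul_apply]

lemma Z_zero (T : X ≃ᵐ X) (x : X) : Z T 0 x = x := by simp [Z]

lemma Z_natCast (T : X ≃ᵐ X) (n : ℕ) (x : X) : Z T (n : ℤ) x = (⇑T)^[n] x := by
  rw [Z, zpow_natCast, ← Equiv.Perm.iterate_eq_pow]
  simp

lemma Z_negNatCast (T : X ≃ᵐ X) (n : ℕ) (x : X) : Z T (-(n : ℤ)) x = (⇑T.symm)^[n] x := by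
  rw [Z, zpow_neg, ← inv_zpow, zpow_natCast, ← Equiv.Perm.iterate_eq_pow]
  rfl

lemma measurable_Z (T : X ≃ᵐ X) (n : ℤ) : Measurable (Z T n) := by
  obtain ⟨k, rfl | rfl⟩ := Int.eq_nat_or_neg n
  · have : Z T (k : ℤ) = (⇑T)^[k] := funext (Z_natCast T k)
    rw [this]; exact T.measurable.iterate k
  · have : Z T (-(k : ℤ)) = (⇑T.symm)^[k] := funext (Z_negNatCast T k)
    rw [this]; exact T.symm.measurable.iterate k

lemma Z_eq_self (T : X ≃ᵐ X)
    (hT : ∀ x : X, ∀ n : ℕ, 1 ≤ n → (⇑T)^[n] x ≠ x)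
    {n : ℤ} {x : X} (h : Z T n x = x) : n = 0 := by
  have key : ∀ k : ℤ, 0 < k → ∀ y : X, Z T k y ≠ y := by
    intro k hk y hy
    have h1 : Z T ((k.toNat : ℕ) : ℤ) y = y := by
      rwa [Int.toNat_of_nonneg hk.le]
    rw [Z_natCast] at h1
    exact hT y k.toNat (by omega) h1
  rcases lt_trichotomy n 0 with h1 | h1 | h1
  · exfalso
    have h2 : Z T (-n) x = x := by
      calc Z T (-n) x = Z T (-n) (Z T n x) := by rw [h]
        _ = Z T (-n + n) x := (Z_add T _ _ x).symm
        _ = x := by rw [neg_add_cancel, Z_zero]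
    exact key (-n) (by omega) x h2
  · exact h1
  · exact absurd h (key n h1 x)

lemma exists_small_section [StandardBorelSpace X] (T : X ≃ᵐ X)
    (hT : ∀ x : X, ∀ n : ℕ, 1 ≤ n → (⇑T)^[n] x ≠ x)
    (lam : Measure X) [IsFiniteMeasure lam] {δ : ℝ≥0∞} (hδ : 0 < δ) :
    ∃ S : Set X, MeasurableSet S ∧ lam S < δ ∧ ∀ x, ∃ k : ℤ, Z T k x ∈ S := by
  classical
  obtain ⟨f, hf⟩ := exists_measurableEmbedding_real X
  set g : X → ℝ := fun x => Real.arctan (f x) + 2 with hg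
  have hgpos : ∀ x, 0 < g x := by
    intro x
    have h1 : -(Real.pi / 2) < Real.arctan (f x) := Real.neg_pi_div_two_lt_arctan _
    have h2 : Real.pi < 3.15 := Real.pi_lt_d2
    simp only [hg]; nlinarith
  have hglt : ∀ x, g x ≤ 4 := by
    intro x
    have h1 : Real.arctan (f x) < Real.pi / 2 := Real.arctan_lt_pi_div_two _
    have h2 : Real.pi < 3.15 := Real.pi_lt_d2
    simp only [hg]; nlinarith
  set h : X → ℝ≥0∞ := fun x => ENNReal.ofReal (g x) with hh
  have hmeas : Measurable h :=
    ENNReal.measurable_ofReal.comp ((Real.measurable_arctan.comp hf.measurable).add_const 2)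
  have hinj : Function.Injective h := by
    intro a b hab
    have : g a = g b := by
      rwa [hh, ENNReal.ofReal_eq_ofReal_iff (hgpos a).le (hgpos b).le] at hab
    exact hf.injective (Real.arctan_injective (by simpa [hg] using this))
  have hpos : ∀ x, h x ≠ 0 := fun x => (ENNReal.ofReal_pos.2 (hgpos x)).ne'
  have hne : ∀ x, h x ≤ ENNReal.ofReal 4 := fun x => ENNReal.ofReal_le_ofReal (hglt x)
  set σ : X → ℝ≥0∞ := fun x => ⨆ n : ℤ, h (Z T n x) with hσ
  have hσmeas : Measurable σ := Measurable.iSup fun n => hmeas.comp (measurable_Z T n)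
  have hσle : ∀ x, σ x ≤ ENNReal.ofReal 4 := fun x => iSup_le fun n => hne _
  have hσtop : ∀ x, σ x ≠ ∞ := fun x => ((hσle x).trans_lt ENNReal.ofReal_lt_top).ne
  have hhσ : ∀ x, h x ≤ σ x := by
    intro x
    have := le_iSup (fun n => h (Z T n x)) 0
    rwa [Z_zero] at this
  have hσpos : ∀ x, σ x ≠ 0 := fun x hx0 => hpos x (le_antisymm (hx0 ▸ hhσ x) zero_le)
  have key : ∀ (k : ℤ) (x : X), σ (Z T k x) ≤ σ x := by
    intro k x
    refine iSup_le fun n => ?_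
    rw [← Z_add]
    exact le_iSup (fun j => h (Z T j x)) (n + k)
  have hσinv : ∀ (k : ℤ) (x : X), σ (Z T k x) = σ x := by
    intro k x
    refine le_antisymm (key k x) ?_
    have := key (-k) (Z T k x)
    rwa [← Z_add, neg_add_cancel, Z_zero] at this
  set M : Set X := {x | σ x ≤ h x} with hM
  have hMmeas : MeasurableSet M := measurableSet_le hσmeas hmeas
  have hMuniq : ∀ (x : X) (k : ℤ), x ∈ M → Z T k x ∈ M → k = 0 := by
    intro x k hx hkx
    have e1 : h x = σ x := le_antisymm (hhσ x) hx
    have e2 : h (Z T k x) = σ (Z T k x) := le_antisymm (hhσ _) hkx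
    have e3 : h (Z T k x) = h x := by rw [e2, hσinv, e1]
    have := hinj e3
    exact Z_eq_self T hT this
  set c : ℕ → ℝ≥0∞ := fun n => ((n : ℝ≥0∞) + 1)⁻¹ with hc
  have hcpos : ∀ n, c n ≠ 0 := fun n => by
    simp [hc, ENNReal.inv_ne_zero]
  have hcanti : ∀ ⦃a b : ℕ⦄, a ≤ b → c b ≤ c a := by
    intro a b hab
    refine ENNReal.inv_le_inv.2 ?_
    exact add_le_add_left (by exact_mod_cast Nat.cast_le.2 hab) 1
  set Ss : ℕ → Set X := fun n => {x | σ x < h x + c n} with hSs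
  have hSsmeas : ∀ n, MeasurableSet (Ss n) :=
    fun n => measurableSet_lt hσmeas (hmeas.add_const _)
  have hSsanti : Antitone Ss := by
    intro a b hab x hx
    exact lt_of_lt_of_le hx (add_le_add_right (hcanti hab) _)
  have hSssec : ∀ (n : ℕ) (x : X), ∃ k : ℤ, Z T k x ∈ Ss n := by
    intro n x
    by_contra hcon
    push_neg at hcon
    have hle : ∀ k : ℤ, h (Z T k x) ≤ σ x - c n := by
      intro k
      have h1 : ¬ (σ (Z T k x) < h (Z T k x) + c n) := hcon k
      rw [hσinv] at h1
      push_neg at h1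
      exact ENNReal.le_sub_of_add_le_right (by simp [hc]) h1
    have h2 : σ x ≤ σ x - c n := iSup_le hle
    have h3 : σ x - c n < σ x := ENNReal.sub_lt_self (hσtop x) (hσpos x) (hcpos n)
    exact absurd h2 h3.not_ge
  have hSsinter : (⋂ n, Ss n) ⊆ M := by
    intro x hx
    simp only [mem_iInter, hSs, mem_setOf_eq] at hx
    refine ENNReal.le_of_forall_pos_le_add fun ε hε _ => ?_
    obtain ⟨n, hn⟩ := ENNReal.exists_inv_nat_lt (a := (ε : ℝ≥0∞))
      (by exact_mod_cast hε.ne')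
    have h1 : c n ≤ (n : ℝ≥0∞)⁻¹ := ENNReal.inv_le_inv.2 (le_add_right le_rfl)
    calc σ x ≤ h x + c n := (hx n).le
      _ ≤ h x + (n : ℝ≥0∞)⁻¹ := add_le_add_right h1 _
      _ ≤ h x + ε := add_le_add_right hn.le _
  set X₂ : Set X := ⋃ k : ℤ, Z T k ⁻¹' M with hX₂
  have hX₂meas : MeasurableSet X₂ :=
    MeasurableSet.iUnion fun k => (measurable_Z T k) hMmeas
  have hX₂mem : ∀ x, x ∈ X₂ ↔ ∃ k : ℤ, Z T k x ∈ M := fun x => by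
    simp [hX₂]
  have hX₂inv : ∀ (k : ℤ) (x : X), Z T k x ∈ X₂ → x ∈ X₂ := by
    intro k x hkx
    obtain ⟨j, hj⟩ := (hX₂mem _).1 hkx
    rw [← Z_add] at hj
    exact (hX₂mem x).2 ⟨j + k, hj⟩
  set R : ℕ → Set X := fun n => ⋃ k : ℕ, ⋃ (_ : n ≤ k), Z T (-(k : ℤ)) ⁻¹' M with hR
  have hRmeas : ∀ n, MeasurableSet (R n) :=
    fun n => MeasurableSet.iUnion fun k => MeasurableSet.iUnion fun _ =>
      (measurable_Z T _) hMmeas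
  have hRmem : ∀ n x, x ∈ R n ↔ ∃ k : ℕ, n ≤ k ∧ Z T (-(k : ℤ)) x ∈ M := by
    intro n x; simp [hR]
  have hRanti : Antitone R := by
    intro a b hab x hx
    obtain ⟨k, hk1, hk2⟩ := (hRmem b x).1 hx
    exact (hRmem a x).2 ⟨k, hab.trans hk1, hk2⟩
  have hRsub : ∀ n, R n ⊆ X₂ := by
    intro n x hx
    obtain ⟨k, _, hk2⟩ := (hRmem n x).1 hx
    exact (hX₂mem x).2 ⟨_, hk2⟩
  set V : ℕ → Set X := fun n => (Ss n \ X₂) ∪ R n with hV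
  have hVmeas : ∀ n, MeasurableSet (V n) :=
    fun n => ((hSsmeas n).diff hX₂meas).union (hRmeas n)
  have hVanti : Antitone V := by
    intro a b hab x hx
    rcases hx with hx | hx
    · exact Or.inl ⟨hSsanti hab hx.1, hx.2⟩
    · exact Or.inr (hRanti hab hx)
  have hVsec : ∀ (n : ℕ) (x : X), ∃ k : ℤ, Z T k x ∈ V n := by
    intro n x
    by_cases hx2 : x ∈ X₂
    · obtain ⟨k₀, hk₀⟩ := (hX₂mem x).1 hx2
      refine ⟨k₀ + n, Or.inr ((hRmem n _).2 ⟨n, le_rfl, ?_⟩)⟩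
      rw [← Z_add]
      have : -(n : ℤ) + (k₀ + n) = k₀ := by ring
      rw [this]; exact hk₀
    · obtain ⟨k, hk⟩ := hSssec n x
      refine ⟨k, Or.inl ⟨hk, fun hmem => hx2 (hX₂inv k x hmem)⟩⟩
  have hVempty : (⋂ n, V n) = ∅ := by
    rw [eq_empty_iff_forall_notMem]
    intro x hx
    simp only [mem_iInter] at hx
    by_cases hx2 : x ∈ X₂
    · have hxR : ∀ n, x ∈ R n := by
        intro n
        rcases hx n with h1 | h1
        · exact absurd hx2 h1.2
        · exact h1
      obtain ⟨k₀, _, hk₀⟩ := (hRmem 0 x).1 (hxR 0)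
      obtain ⟨k₁, hk₁ge, hk₁⟩ := (hRmem (k₀ + 1) x).1 (hxR (k₀ + 1))
      have hzz : Z T ((k₁ : ℤ) - k₀) (Z T (-(k₁ : ℤ)) x) ∈ M := by
        rw [← Z_add]
        have : (k₁ : ℤ) - k₀ + -(k₁ : ℤ) = -(k₀ : ℤ) := by ring
        rw [this]; exact hk₀
      have := hMuniq _ _ hk₁ hzz
      omega
    · have hxS : ∀ n, x ∈ Ss n := by
        intro n
        rcases hx n with h1 | h1
        · exact h1.1
        · exact absurd (hRsub n h1) hx2
      have hxM : x ∈ M := hSsinter (mem_iInter.2 hxS)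
      exact hx2 ((hX₂mem x).2 ⟨0, by rwa [Z_zero]⟩)
  have htend : Tendsto (lam ∘ V) atTop (nhds (lam (⋂ n, V n))) :=
    tendsto_measure_iInter_atTop (fun n => (hVmeas n).nullMeasurableSet) hVanti
      ⟨0, measure_ne_top lam _⟩
  rw [hVempty, measure_empty] at htend
  have hev : ∀ᶠ n in atTop, lam (V n) < δ := htend.eventually_lt_const hδ
  obtain ⟨N, hN⟩ := hev.exists
  exact ⟨V N, hVmeas N, hN, hVsec N⟩

lemma tower (T : X ≃ᵐ X) (m : ℕ) (hm : 1 ≤ m) (S : Set X)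
    (hS : MeasurableSet S) (hsec : ∀ x, ∃ k : ℤ, Z T k x ∈ S) :
    ∃ F : Set X, MeasurableSet F ∧
      (∀ i j : ℕ, i < m → j < m → i ≠ j →
        Disjoint ((⇑T)^[i] '' F) ((⇑T)^[j] '' F)) ∧
      (⋃ j ∈ Finset.range m, (⇑T)^[j] '' F)ᶜ ⊆ ⋃ j ∈ Finset.Ico 1 m, (⇑T)^[j] ⁻¹' S := by
  classical
  set Bb : ℕ → Set X := fun n => (fun x => Z T (-(n : ℤ)) x) ⁻¹' S with hBb
  set Cc : ℕ → Set X := fun n => Bb n \ ⋃ k : ℕ, ⋃ (_ : k < n), Bb k with hCc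
  set Bf : ℕ → Set X := fun n => (fun x => Z T (n : ℤ) x) ⁻¹' S with hBf
  set Cf : ℕ → Set X := fun n => Bf n \ ⋃ k : ℕ, ⋃ (_ : k < n), Bf k with hCf
  set W : Set X := ⋃ n : ℕ, Bb n with hWdef
  set F₁ : Set X :=
    (⋃ q : ℕ, Cc (m * q)) ∩ ⋂ j ∈ Finset.Ico 1 m, (fun x => Z T (j : ℤ) x) ⁻¹' Sᶜ with hF₁
  set F₂ : Set X := (⋃ q : ℕ, Cf (m * q)) \ W with hF₂
  have memCc : ∀ (n : ℕ) (x : X),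
      x ∈ Cc n ↔ (Z T (-(n : ℤ)) x ∈ S ∧ ∀ k, k < n → Z T (-(k : ℤ)) x ∉ S) := by
    intro n x
    simp only [hCc, hBb, mem_diff, mem_preimage, mem_iUnion, not_exists]
  have memCf : ∀ (n : ℕ) (x : X),
      x ∈ Cf n ↔ (Z T ((n : ℕ) : ℤ) x ∈ S ∧ ∀ k, k < n → Z T ((k : ℕ) : ℤ) x ∉ S) := by
    intro n x
    simp only [hCf, hBf, mem_diff, mem_preimage, mem_iUnion, not_exists]
  have memW : ∀ x : X, x ∈ W ↔ ∃ n : ℕ, Z T (-(n : ℤ)) x ∈ S := by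
    intro x; simp only [hWdef, hBb, mem_iUnion, mem_preimage]
  have memF₁ : ∀ x : X, x ∈ F₁ ↔
      (∃ q : ℕ, x ∈ Cc (m * q)) ∧ ∀ j, 1 ≤ j → j < m → Z T ((j : ℕ) : ℤ) x ∉ S := by
    intro x
    simp only [hF₁, mem_inter_iff, mem_iUnion, mem_iInter, Finset.mem_Ico, mem_preimage,
      mem_compl_iff, and_imp]
  have memF₂ : ∀ x : X, x ∈ F₂ ↔ (∃ q : ℕ, x ∈ Cf (m * q)) ∧ x ∉ W := by
    intro x
    simp only [hF₂, mem_diff, mem_iUnion]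
  have Cc_unique : ∀ (n n' : ℕ) (x : X), x ∈ Cc n → x ∈ Cc n' → n = n' := by
    intro n n' x hn hn'
    rw [memCc] at hn hn'
    by_contra hne
    rcases Nat.lt_or_ge n n' with h | h
    · exact hn'.2 n h hn.1
    · exact hn.2 n' (by omega) hn'.1
  have Cf_unique : ∀ (n n' : ℕ) (x : X), x ∈ Cf n → x ∈ Cf n' → n = n' := by
    intro n n' x hn hn'
    rw [memCf] at hn hn'
    by_contra hne
    rcases Nat.lt_or_ge n n' with h | h
    · exact hn'.2 n h hn.1
    · exact hn.2 n' (by omega) hn'.1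
  have hdvd2 : ∀ a b c' : ℕ, m ∣ a → m ∣ b → a = c' + b → 1 ≤ c' → c' < m → False := by
    intro a b c' hda hdb he h1 h2
    have h3 : m ∣ c' := by
      have h4 := Nat.dvd_sub hda hdb
      rwa [show a - b = c' by omega] at h4
    exact absurd (Nat.le_of_dvd (by omega) h3) (by omega)
  -- The key disjointness property
  have key : ∀ c : ℕ, 1 ≤ c → c < m → ∀ x', x' ∈ F₁ ∪ F₂ → Z T ((c : ℕ) : ℤ) x' ∉ F₁ ∪ F₂ := by
    intro c hc1 hcm x' hx' hx
    rw [Set.mem_union] at hx' hx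
    set x := Z T ((c : ℕ) : ℤ) x' with hxdef
    have hcomp : ∀ j : ℤ, Z T j x = Z T (j + c) x' := fun j => by rw [hxdef, ← Z_add]
    rcases hx' with hx'1 | hx'2
    · -- x' in the base part F₁
      rw [memF₁] at hx'1
      obtain ⟨⟨q, hq⟩, hblock⟩ := hx'1
      rw [memCc] at hq
      set n' := m * q with hn'
      have hxW : x ∈ W := by
        rw [memW]
        refine ⟨n' + c, ?_⟩
        rw [hcomp]
        have e : (-(↑(n' + c)) + (c : ℤ)) = -(n' : ℤ) := by push_cast; ring
        rw [e]; exact hq.1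
      have hx1 : x ∈ F₁ := by
        rcases hx with h | h
        · exact h
        · rw [memF₂] at h; exact absurd hxW h.2
      rw [memF₁] at hx1
      obtain ⟨⟨q₂, hq₂⟩, _⟩ := hx1
      rcases Nat.eq_zero_or_pos n' with h0 | hpos
    -- subcase: x' itself is a marker
      · have hx'S : x' ∈ S := by
          have h5 := hq.1
          rw [h0] at h5
          rwa [Nat.cast_zero, neg_zero, Z_zero] at h5
        have hxCc : x ∈ Cc c := by
          rw [memCc]
          constructor
          · rw [hcomp]
            have e : (-(c : ℤ) + (c : ℤ)) = 0 := by ring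
            rw [e, Z_zero]; exact hx'S
          · intro k hk
            rw [hcomp]
            have e : (-(k : ℤ) + (c : ℤ)) = ((c - k : ℕ) : ℤ) := by omega
            rw [e]
            exact hblock (c - k) (by omega) (by omega)
        have he := Cc_unique _ _ _ hq₂ hxCc
        exact hdvd2 (m * q₂) 0 c ⟨q₂, rfl⟩ (dvd_zero m) (by omega) hc1 hcm
    -- subcase: marker strictly behind x'
      · have hxCc : x ∈ Cc (c + n') := by
          rw [memCc]
          constructor
          · rw [hcomp]
            have e : (-(↑(c + n')) + (c : ℤ)) = -(n' : ℤ) := by push_cast; ring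
            rw [e]; exact hq.1
          · intro k hk
            rw [hcomp]
            rcases lt_trichotomy k c with hkc | hkc | hkc
            · have e : (-(k : ℤ) + (c : ℤ)) = ((c - k : ℕ) : ℤ) := by omega
              rw [e]
              exact hblock (c - k) (by omega) (by omega)
            · subst hkc
              have e : (-(k : ℤ) + (k : ℤ)) = 0 := by ring
              rw [e, Z_zero]
              have h6 := hq.2 0 (by omega)
              rwa [Nat.cast_zero, neg_zero, Z_zero] at h6
            · have e : (-(k : ℤ) + (c : ℤ)) = -((k - c : ℕ) : ℤ) := by omega
              rw [e]
              exact hq.2 (k - c) (by omega)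
        have he := Cc_unique _ _ _ hq₂ hxCc
        exact hdvd2 (m * q₂) n' c ⟨q₂, rfl⟩ ⟨q, hn'⟩ he hc1 hcm
    · -- x' in the reversed part F₂
      rw [memF₂] at hx'2
      obtain ⟨⟨q, hq⟩, hW'⟩ := hx'2
      rw [memCf] at hq
      set n' := m * q with hn'
      have hWmb : ∀ k : ℕ, Z T (-(k : ℤ)) x' ∉ S := by
        intro k hk
        exact hW' ((memW _).2 ⟨k, hk⟩)
      have hq1 : 1 ≤ n' := by
        by_contra h0
        have h0' : n' = 0 := by omega
        have h5 := hq.1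
        rw [h0'] at h5
        rw [Nat.cast_zero, Z_zero] at h5
        have h6 := hWmb 0
        rw [Nat.cast_zero, neg_zero, Z_zero] at h6
        exact h6 h5
      have hcn : c < n' := by
        have h7 : m ≤ n' := Nat.le_of_dvd (by omega) ⟨q, hn'⟩
        omega
      have hxW : x ∉ W := by
        rw [memW]; rintro ⟨k, hk⟩
        rw [hcomp] at hk
        rcases le_or_gt k c with hkc | hkc
        · have e : (-(k : ℤ) + (c : ℤ)) = ((c - k : ℕ) : ℤ) := by omega
          rw [e] at hk
          exact hq.2 (c - k) (by omega) hk
        · have e : (-(k : ℤ) + (c : ℤ)) = -((k - c : ℕ) : ℤ) := by omega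
          rw [e] at hk
          exact hWmb (k - c) hk
      have hx2 : x ∈ F₂ := by
        rcases hx with h | h
        · exfalso
          rw [memF₁] at h
          obtain ⟨⟨q₂, hq₂⟩, _⟩ := h
          rw [memCc] at hq₂
          exact hxW ((memW _).2 ⟨m * q₂, hq₂.1⟩)
        · exact h
      rw [memF₂] at hx2
      obtain ⟨⟨q₂, hq₂⟩, _⟩ := hx2
      have hxCf : x ∈ Cf (n' - c) := by
        rw [memCf]
        constructor
        · rw [hcomp]
          have e : ((↑(n' - c) : ℤ) + (c : ℤ)) = (n' : ℤ) := by omega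
          rw [e]; exact hq.1
        · intro k hk
          rw [hcomp]
          have e : ((k : ℤ) + (c : ℤ)) = ((k + c : ℕ) : ℤ) := by push_cast; ring
          rw [e]
          exact hq.2 (k + c) (by omega)
      have he := Cf_unique _ _ _ hq₂ hxCf
      have he2 : n' = c + m * q₂ := by omega
      exact hdvd2 n' (m * q₂) c ⟨q, hn'⟩ ⟨q₂, rfl⟩ he2 hc1 hcm
  -- The covering property
  have cover : ∀ y, (∀ j : ℕ, 1 ≤ j → j < m → Z T ((j : ℕ) : ℤ) y ∉ S) →
      ∃ r : ℕ, r < m ∧ ∃ x, x ∈ F₁ ∪ F₂ ∧ Z T ((r : ℕ) : ℤ) x = y := by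
    intro y hy
    by_cases hyW : y ∈ W
    · -- backward orbit of y meets S
      have hex : ∃ n : ℕ, Z T (-(n : ℤ)) y ∈ S := (memW y).1 hyW
      set n := Nat.find hex with hn
      have hnS : Z T (-(n : ℤ)) y ∈ S := by rw [hn]; exact Nat.find_spec hex
      have hmin : ∀ k, k < n → Z T (-(k : ℤ)) y ∉ S := by
        intro k hk
        rw [hn] at hk
        exact Nat.find_min hex hk
      set r := n % m with hr
      have hrm : r < m := Nat.mod_lt _ (by omega)
      have hrn : r ≤ n := Nat.mod_le n m
      obtain ⟨d, hd⟩ : ∃ d : ℕ, m * d = n - r := by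
        obtain ⟨d, hd⟩ := Nat.dvd_sub_mod (n := m) n
        exact ⟨d, by omega⟩
      set x := Z T (-(r : ℤ)) y with hx
      have hcomp : ∀ j : ℤ, Z T j x = Z T (j + -(r : ℤ)) y := fun j => by rw [hx, ← Z_add]
      have hxr : Z T ((r : ℕ) : ℤ) x = y := by
        rw [hcomp, add_neg_cancel, Z_zero]
      have hxCc : x ∈ Cc (n - r) := by
        rw [memCc]
        constructor
        · rw [hcomp]
          have e : (-(↑(n - r) : ℤ) + -(r : ℤ)) = -(n : ℤ) := by omega
          rw [e]; exact hnS
        · intro k hk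
          rw [hcomp]
          have e : (-(k : ℤ) + -(r : ℤ)) = -((k + r : ℕ) : ℤ) := by push_cast; ring
          rw [e]
          exact hmin (k + r) (by omega)
      have hblockx : ∀ j, 1 ≤ j → j < m → Z T ((j : ℕ) : ℤ) x ∉ S := by
        intro j h1 h2
        rw [hcomp]
        rcases lt_trichotomy j r with hjr | hjr | hjr
        · have e : ((j : ℤ) + -(r : ℤ)) = -((r - j : ℕ) : ℤ) := by omega
          rw [e]
          exact hmin (r - j) (by omega)
        · have e : ((j : ℤ) + -(r : ℤ)) = 0 := by omega
          rw [e, Z_zero]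
          intro hyS
          have h0 : n ≤ 0 := by
            rw [hn]
            exact Nat.find_le (by simpa [Z_zero] using hyS)
          omega
        · have e : ((j : ℤ) + -(r : ℤ)) = ((j - r : ℕ) : ℤ) := by omega
          rw [e]
          exact hy (j - r) (by omega) (by omega)
      refine ⟨r, hrm, x, Or.inl ((memF₁ x).2 ⟨⟨d, by rw [hd]; exact hxCc⟩, hblockx⟩), hxr⟩
    · -- backward orbit misses S; use forward orbit
      have hWy : ∀ k : ℕ, Z T (-(k : ℤ)) y ∉ S := by
        intro k hk
        exact hyW ((memW y).2 ⟨k, hk⟩)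
      have hex : ∃ n : ℕ, Z T ((n : ℕ) : ℤ) y ∈ S := by
        obtain ⟨k, hk⟩ := hsec y
        rcases le_or_gt 0 k with h0 | h0
        · exact ⟨k.toNat, by rwa [Int.toNat_of_nonneg h0]⟩
        · exfalso
          apply hWy (-k).toNat
          have e : (-(((-k).toNat : ℕ) : ℤ)) = k := by omega
          rwa [e]
      set n := Nat.find hex with hn
      have hnS : Z T ((n : ℕ) : ℤ) y ∈ S := by rw [hn]; exact Nat.find_spec hex
      have hmin : ∀ k, k < n → Z T ((k : ℕ) : ℤ) y ∉ S := by
        intro k hk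
        rw [hn] at hk
        exact Nat.find_min hex hk
      have hn1 : 1 ≤ n := by
        rcases Nat.eq_zero_or_pos n with h0 | h1
        · exfalso
          apply hWy 0
          rw [Nat.cast_zero, neg_zero, Z_zero]
          have h5 := hnS
          rw [h0, Nat.cast_zero, Z_zero] at h5
          exact h5
        · exact h1
      set r := if n % m = 0 then 0 else m - n % m with hr
      have hmod : n % m < m := Nat.mod_lt _ (by omega)
      have hrm : r < m := by
        rw [hr]; split
        · omega
        · omega
      obtain ⟨d, hd⟩ : ∃ d : ℕ, m * d = n + r := by
        obtain ⟨d, hd⟩ := Nat.dvd_sub_mod (n := m) n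
        have hle : n % m ≤ n := Nat.mod_le n m
        rcases Nat.eq_zero_or_pos (n % m) with h0 | h0
        · refine ⟨d, ?_⟩
          rw [hr, if_pos h0]
          omega
        · refine ⟨d + 1, ?_⟩
          rw [hr, if_neg (by omega)]
          have : m * (d + 1) = m * d + m := by ring
          omega
      set x := Z T (-(r : ℤ)) y with hx
      have hcomp : ∀ j : ℤ, Z T j x = Z T (j + -(r : ℤ)) y := fun j => by rw [hx, ← Z_add]
      have hxr : Z T ((r : ℕ) : ℤ) x = y := by
        rw [hcomp, add_neg_cancel, Z_zero]
      have hxW : x ∉ W := by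
        rw [memW]; rintro ⟨k, hk⟩
        rw [hcomp] at hk
        have e : (-(k : ℤ) + -(r : ℤ)) = -((k + r : ℕ) : ℤ) := by push_cast; ring
        rw [e] at hk
        exact hWy (k + r) hk
      have hxCf : x ∈ Cf (n + r) := by
        rw [memCf]
        constructor
        · rw [hcomp]
          have e : ((↑(n + r) : ℤ) + -(r : ℤ)) = (n : ℤ) := by push_cast; ring
          rw [e]; exact hnS
        · intro k hk
          rw [hcomp]
          rcases le_or_gt r k with hkr | hkr
          · have e : ((k : ℤ) + -(r : ℤ)) = ((k - r : ℕ) : ℤ) := by omega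
            rw [e]
            exact hmin (k - r) (by omega)
          · have e : ((k : ℤ) + -(r : ℤ)) = -((r - k : ℕ) : ℤ) := by omega
            rw [e]
            exact hWy (r - k)
      refine ⟨r, hrm, x, Or.inr ((memF₂ x).2 ⟨⟨d, by rw [hd]; exact hxCf⟩, hxW⟩), hxr⟩
  -- measurability
  have hBbm : ∀ n, MeasurableSet (Bb n) := fun n => (measurable_Z T _) hS
  have hBfm : ∀ n, MeasurableSet (Bf n) := fun n => (measurable_Z T _) hS
  have hCcm : ∀ n, MeasurableSet (Cc n) := fun n =>
    (hBbm n).diff (MeasurableSet.iUnion fun k => MeasurableSet.iUnion fun _ => hBbm k)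
  have hCfm : ∀ n, MeasurableSet (Cf n) := fun n =>
    (hBfm n).diff (MeasurableSet.iUnion fun k => MeasurableSet.iUnion fun _ => hBfm k)
  have hF1m : MeasurableSet F₁ :=
    (MeasurableSet.iUnion fun q => hCcm _).inter
      (MeasurableSet.iInter fun j => MeasurableSet.iInter fun _ => (measurable_Z T _) hS.compl)
  have hF2m : MeasurableSet F₂ :=
    (MeasurableSet.iUnion fun q => hCfm _).diff (MeasurableSet.iUnion hBbm)
  have hZnat : ∀ (k : ℕ) (x : X), (⇑T)^[k] x = Z T ((k : ℕ) : ℤ) x :=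
    fun k x => (Z_natCast T k x).symm
  refine ⟨F₁ ∪ F₂, hF1m.union hF2m, ?_, ?_⟩
  · have main : ∀ i j : ℕ, i < j → j < m →
        Disjoint ((⇑T)^[i] '' (F₁ ∪ F₂)) ((⇑T)^[j] '' (F₁ ∪ F₂)) := by
      intro i j hij hjm
      rw [Set.disjoint_left]
      rintro z ⟨a, ha, rfl⟩ ⟨b, hb, hba⟩
      rw [hZnat, hZnat] at hba
      have h2 : Z T ((↑(j - i) : ℕ) : ℤ) b = a := by
        have h3 : Z T (-(i : ℤ)) (Z T ((j : ℕ) : ℤ) b) = Z T (-(i : ℤ)) (Z T ((i : ℕ) : ℤ) a) := by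
          rw [hba]
        rw [← Z_add, ← Z_add, neg_add_cancel, Z_zero] at h3
        have e : ((↑(j - i) : ℕ) : ℤ) = -(i : ℤ) + (j : ℤ) := by omega
        rw [e]; exact h3
      exact key (j - i) (by omega) (by omega) b hb (h2 ▸ ha)
    intro i j him hjm hne
    rcases Nat.lt_or_ge i j with h | h
    · exact main i j h hjm
    · exact (main j i (by omega) him).symm
  · intro y hy
    by_contra hcon
    have hy2 : ∀ j : ℕ, 1 ≤ j → j < m → Z T ((j : ℕ) : ℤ) y ∉ S := by
      intro j h1 h2 hjS
      exact hcon (mem_iUnion₂.2 ⟨j, Finset.mem_Ico.2 ⟨h1, h2⟩,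
        by rw [mem_preimage, hZnat]; exact hjS⟩)
    obtain ⟨r, hrm2, x, hxF, hxr⟩ := cover y hy2
    exact hy (mem_iUnion₂.2 ⟨r, Finset.mem_range.2 hrm2, ⟨x, hxF, by rw [hZnat]; exact hxr⟩⟩)


end RokhlinAux

open MeasureTheory

/-- **Rokhlin lemma in Borel dynamics.** Let `T` be an aperiodic Borel automorphism of a
standard Borel space `X`. Then for every `m ≥ 1`, `ε > 0`, and Borel probability measures
`μ₁, …, μ_p`, there is a Borel set `F` with `F, T F, …, T^{m-1} F` pairwise disjoint and
`μᵢ(F ∪ T F ∪ ⋯ ∪ T^{m-1} F) > 1 - ε` for all `i`. -/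
theorem stmt_0 {X : Type*} [MeasurableSpace X] [StandardBorelSpace X]
    (T : X ≃ᵐ X)
    (hT : ∀ x : X, ∀ n : ℕ, 1 ≤ n → (T : X → X)^[n] x ≠ x)
    (m : ℕ) (hm : 1 ≤ m) (ε : ℝ) (hε : 0 < ε)
    (p : ℕ) (μ : Fin p → Measure X)
    (hμ : ∀ i, IsProbabilityMeasure (μ i)) :
    ∃ F : Set X, MeasurableSet F ∧
      (∀ i j : ℕ, i < m → j < m → i ≠ j →
        Disjoint ((T : X → X)^[i] '' F) ((T : X → X)^[j] '' F)) ∧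
      (∀ i : Fin p,
        1 - ENNReal.ofReal ε < μ i (⋃ j ∈ Finset.range m, (T : X → X)^[j] '' F)) := by
  classical
  set ε' : ℝ := min ε (1/2) with hε'def
  have hε'pos : 0 < ε' := lt_min hε (by norm_num)
  have hε'le : ε' ≤ 1/2 := min_le_right _ _
  set lam : Measure X :=
    ∑ i : Fin p, ∑ j ∈ Finset.range m, Measure.map ((⇑T)^[j]) (μ i) with hlam
  have hfin : IsFiniteMeasure lam := by
    constructor
    rw [hlam, Measure.finset_sum_apply]
    refine ENNReal.sum_lt_top.2 fun i _ => ?_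
    rw [Measure.finset_sum_apply]
    refine ENNReal.sum_lt_top.2 fun j _ => ?_
    rw [Measure.map_apply (T.measurable.iterate j) MeasurableSet.univ]
    haveI := hμ i
    simpa using measure_lt_top (μ i) _
  obtain ⟨S, hSm, hSsmall, hSsec⟩ := RokhlinAux.exists_small_section T hT lam
    (δ := ENNReal.ofReal ε') (ENNReal.ofReal_pos.2 hε'pos)
  obtain ⟨F, hFm, hFdisj, hFcov⟩ := RokhlinAux.tower T m hm S hSm hSsec
  refine ⟨F, hFm, hFdisj, fun i => ?_⟩
  haveI := hμ i
  set U := ⋃ j ∈ Finset.range m, (⇑T)^[j] '' F with hU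
  have himg : ∀ j : ℕ, (⇑T)^[j] '' F = ((⇑T.symm)^[j]) ⁻¹' F := by
    intro j
    ext z
    constructor
    · rintro ⟨a, ha, rfl⟩
      have h1 : (⇑T.symm)^[j] ((⇑T)^[j] a) = a :=
        (Function.LeftInverse.iterate T.symm_apply_apply j) a
      simpa [Set.mem_preimage, h1]
    · intro hz
      exact ⟨(⇑T.symm)^[j] z, hz, (Function.LeftInverse.iterate T.apply_symm_apply j) z⟩
  have hUm : MeasurableSet U := by
    rw [hU]
    exact MeasurableSet.iUnion fun j => MeasurableSet.iUnion fun _ =>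
      (himg j ▸ (T.symm.measurable.iterate j) hFm)
  have hcompl : μ i Uᶜ < ENNReal.ofReal ε' := by
    have h1 : μ i Uᶜ ≤ ∑ j ∈ Finset.Ico 1 m, μ i ((⇑T)^[j] ⁻¹' S) :=
      (measure_mono hFcov).trans (measure_biUnion_finset_le _ _)
    have h2 : ∀ j : ℕ, μ i ((⇑T)^[j] ⁻¹' S) = Measure.map ((⇑T)^[j]) (μ i) S :=
      fun j => (Measure.map_apply (T.measurable.iterate j) hSm).symm
    have h3 : ∑ j ∈ Finset.Ico 1 m, μ i ((⇑T)^[j] ⁻¹' S)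
        ≤ ∑ j ∈ Finset.range m, Measure.map ((⇑T)^[j]) (μ i) S := by
      simp_rw [h2]
      exact Finset.sum_le_sum_of_subset
        (fun a ha => Finset.mem_range.2 (Finset.mem_Ico.1 ha).2)
    have h4 : ∑ j ∈ Finset.range m, Measure.map ((⇑T)^[j]) (μ i) S ≤ lam S := by
      rw [hlam, Measure.finset_sum_apply]
      have h5 := Finset.single_le_sum
        (f := fun i' => (∑ j ∈ Finset.range m, Measure.map ((⇑T)^[j]) (μ i')) S)
        (fun _ _ => zero_le) (Finset.mem_univ i)
      calc ∑ j ∈ Finset.range m, Measure.map ((⇑T)^[j]) (μ i) S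
          = (∑ j ∈ Finset.range m, Measure.map ((⇑T)^[j]) (μ i)) S :=
            (Measure.finset_sum_apply _ _ _).symm
        _ ≤ _ := h5
    exact (((h1.trans h3).trans h4)).trans_lt hSsmall
  have hd1 : ENNReal.ofReal ε' ≤ 1 := ENNReal.ofReal_le_one.2 (by linarith)
  have hU1 : μ i U + μ i Uᶜ = 1 := by
    rw [measure_add_measure_compl hUm]
    exact measure_univ
  have hmain : (1 : ℝ≥0∞) - ENNReal.ofReal ε' < μ i U := by
    rw [ENNReal.sub_lt_iff_lt_right ENNReal.ofReal_ne_top hd1]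
    calc (1 : ℝ≥0∞) = μ i U + μ i Uᶜ := hU1.symm
      _ < μ i U + ENNReal.ofReal ε' := ENNReal.add_lt_add_left (measure_ne_top _ _) hcompl
  have hle : (1 : ℝ≥0∞) - ENNReal.ofReal ε ≤ 1 - ENNReal.ofReal ε' :=
    tsub_le_tsub_left (ENNReal.ofReal_le_ofReal (min_le_left _ _)) 1
  exact lt_of_le_of_lt hle hmain
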